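/- Let f be holomorphic on a neighborhood of a compact set, with a conformal metric ρ(z)|dz| where ρ(z) = Σ_{k=0}^{N-1} κ^{-k/N} |(f^k)'(z)| and |(f^N)'| ≥ κ > 1 on the domain. Then ρ(f(z))·|f'(z)| ≥ κ^{1/N} ρ(z) for all z in the domain, i.e. f is uniformly expanding for the metric ρ. -/

import Mathlib

open Real

/-- Expansion in the Lyapunov metric: if `f` is holomorphic on `V`, maps `V` to itself, and
`|(f^N)'| ≥ κ > 1` on `V`, then the conformal density
`ρ(z) = Σ_{k=0}^{N-1} κ^{-k/N} |(f^k)'(z)|` satisfies `ρ(f z)·|f'(z)| ≥ κ^{1/N} ρ(z)` on `V`. -/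
theorem stmt_3 (V : Set ℂ) (hV : IsOpen V) (f : ℂ → ℂ)
    (hf : DifferentiableOn ℂ f V) (hmaps : Set.MapsTo f V V)
    (N : ℕ) (κ : ℝ) (hκ : 1 < κ)
    (hexp : ∀ z ∈ V, κ ≤ ‖deriv (f^[N]) z‖)
    (ρ : ℂ → ℝ)
    (hρ : ∀ z, ρ z = ∑ k ∈ Finset.range N, κ ^ (-(k : ℝ) / N) * ‖deriv (f^[k]) z‖) :
    ∀ z ∈ V, κ ^ ((1 : ℝ) / N) * ρ z ≤ ρ (f z) * ‖deriv f z‖ := by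
  intro z hz
  have hκ0 : (0:ℝ) < κ := lt_trans one_pos hκ
  rcases Nat.eq_zero_or_pos N with hN | hN
  · subst hN; simp [hρ]
  obtain ⟨M, rfl⟩ : ∃ M, N = M + 1 := ⟨N - 1, (Nat.succ_pred_eq_of_pos hN).symm⟩
  have hfz : f z ∈ V := hmaps hz
  have hdiff : ∀ k, ∀ w ∈ V, DifferentiableAt ℂ (f^[k]) w := by
    intro k
    induction k with
    | zero => intro w _; simp only [Function.iterate_zero]; exact differentiableAt_id
    | succ k ih =>
      intro w hw
      rw [Function.iterate_succ]
      exact DifferentiableAt.comp w (ih (f w) (hmaps hw))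
        (hf.differentiableAt (hV.mem_nhds hw))
  have hchain : ∀ k : ℕ, ‖deriv (f^[k+1]) z‖ = ‖deriv (f^[k]) (f z)‖ * ‖deriv f z‖ := by
    intro k
    rw [Function.iterate_succ,
      deriv_comp z (hdiff k _ hfz) (hf.differentiableAt (hV.mem_nhds hz)), norm_mul]
  have key : ρ (f z) * ‖deriv f z‖
      = ∑ k ∈ Finset.range (M+1), κ ^ (-(k : ℝ) / (M+1 : ℕ)) * ‖deriv (f^[k+1]) z‖ := by
    rw [hρ, Finset.sum_mul]
    refine Finset.sum_congr rfl fun k _ => ?_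
    rw [mul_assoc, ← hchain k]
  rw [key, hρ, Finset.mul_sum, Finset.sum_range_succ' _ M, Finset.sum_range_succ]
  have hmid : ∀ k ∈ Finset.range M,
      κ ^ ((1:ℝ)/(M+1 : ℕ)) * (κ ^ (-((k+1 : ℕ) : ℝ)/(M+1 : ℕ)) * ‖deriv (f^[k+1]) z‖)
        = κ ^ (-(k : ℝ)/(M+1 : ℕ)) * ‖deriv (f^[k+1]) z‖ := by
    intro k _
    rw [← mul_assoc, ← rpow_add hκ0]
    congr 2
    push_cast
    field_simp
    ring
  rw [Finset.sum_congr rfl hmid]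
  refine add_le_add (le_refl _) ?_
  have hD0 : ‖deriv (f^[0]) z‖ = 1 := by simp
  have hDN : κ ≤ ‖deriv (f^[M+1]) z‖ := hexp z hz
  have hc : κ ^ (-((M:ℕ) : ℝ)/(M+1 : ℕ)) * κ = κ ^ ((1:ℝ)/(M+1 : ℕ)) := by
    rw [← rpow_add_one hκ0.ne']
    congr 1
    push_cast
    field_simp
    ring
  calc κ ^ ((1:ℝ)/(M+1 : ℕ)) * (κ ^ (-((0:ℕ) : ℝ)/(M+1 : ℕ)) * ‖deriv (f^[0]) z‖)
      = κ ^ ((1:ℝ)/(M+1 : ℕ)) := by simp [hD0]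
    _ = κ ^ (-((M:ℕ) : ℝ)/(M+1 : ℕ)) * κ := hc.symm
    _ ≤ κ ^ (-((M:ℕ) : ℝ)/(M+1 : ℕ)) * ‖deriv (f^[M+1]) z‖ := by
        exact mul_le_mul_of_nonneg_left hDN (rpow_nonneg hκ0.le _)
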